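/- arXiv:0903.5442 — 7 statements merged into one kernel-verified Lean document; each statement's English description precedes it below -/
import Mathlib

section
/- Let m ≥ 3 be a natural number. For each natural number d ≥ 1 define χ_d = (m / ((d+1)·((m-1)·d + m))) · C((m-1)²·d + (m-1)·m, d), where C denotes the binomial coefficient (this is the Euler characteristic of the Kronecker moduli space M^m_{d,d+1}). Then the sequence (ln χ_d)/d converges as d → ∞, and its limit equals (m-1)²·ln((m-1)²) − (m²−2m)·ln(m²−2m). -/
open Filter Real Topology

private lemma KE.tendsto_linear (α β : ℝ) (hα : 0 < α) :
    Tendsto (fun d : ℕ => α * d + β) atTop atTop :=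
  tendsto_atTop_add_const_right _ β
    ((tendsto_natCast_atTop_atTop (R := ℝ)).const_mul_atTop hα)

private lemma KE.log_linear_div (α β : ℝ) (hα : 0 < α) :
    Tendsto (fun d : ℕ => Real.log (α * d + β) / d) atTop (𝓝 0) := by
  have h := (Real.tendsto_pow_log_div_mul_add_atTop (1/α) (-β/α) 1 (by positivity)).comp
    (KE.tendsto_linear α β hα)
  refine h.congr fun d => ?_
  have h2 : α⁻¹ * (α * d + β) + -β/α = (d : ℝ) := by field_simp; ring
  simp [Function.comp, one_div, h2]

private lemma KE.ratio (α β γ δ : ℝ) (hγ : 0 < γ) :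
    Tendsto (fun d : ℕ => (α * d + β) / (γ * d + δ)) atTop (𝓝 (α / γ)) := by
  have h1 : Tendsto (fun d : ℕ => α + β / d) atTop (𝓝 α) := by
    simpa using tendsto_const_nhds.add (tendsto_const_div_atTop_nhds_zero_nat β)
  have h2 : Tendsto (fun d : ℕ => γ + δ / d) atTop (𝓝 γ) := by
    simpa using tendsto_const_nhds.add (tendsto_const_div_atTop_nhds_zero_nat δ)
  have h3 := h1.div h2 hγ.ne'
  refine h3.congr' ?_
  have hev : ∀ᶠ d : ℕ in atTop, 0 < γ * d + δ :=
    (KE.tendsto_linear γ δ hγ).eventually_gt_atTop 0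
  filter_upwards [hev, eventually_gt_atTop 0] with d hd hd0
  have hdR : (0:ℝ) < d := by exact_mod_cast hd0
  simp only [Pi.div_apply]
  have hne : γ + δ / (d:ℝ) ≠ 0 := by
    have he : γ + δ / (d:ℝ) = (γ * d + δ) / d := by field_simp
    rw [he]
    positivity
  rw [div_eq_div_iff hne hd.ne']
  field_simp

private lemma KE.log_choose_add (k n : ℕ) (hk : k ≤ n) (t : ℕ) :
    Real.log (((n + t).choose k : ℝ)) = Real.log ((n.choose k : ℝ)) +
      ∑ j ∈ Finset.range t,
        (Real.log ((n:ℝ) + 1 + j) - Real.log ((n:ℝ) - k + 1 + j)) := by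
  induction t with
  | zero => simp
  | succ t ih =>
    have hk' : k ≤ n + t := hk.trans (Nat.le_add_right _ _)
    have hid := Nat.choose_mul_succ_eq (n + t) k
    have hsub : k ≤ n + t + 1 := hk'.trans (Nat.le_succ _)
    have hidR : ((n + t).choose k : ℝ) * ((n:ℝ) + t + 1) =
        ((n + t + 1).choose k : ℝ) * ((n:ℝ) + t + 1 - k) := by
      have := congrArg (fun x : ℕ => (x : ℝ)) hid
      push_cast [Nat.cast_sub hsub] at this
      linarith [this]
    have hpos1 : (0:ℝ) < ((n + t).choose k : ℝ) :=
      by exact_mod_cast Nat.choose_pos hk'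
    have hpos2 : (0:ℝ) < (n:ℝ) + t + 1 := by positivity
    have hpos3 : (0:ℝ) < (n:ℝ) + t + 1 - k := by
      have : (k:ℝ) ≤ n := by exact_mod_cast hk
      linarith
    have heq : ((n + t + 1).choose k : ℝ) =
        ((n + t).choose k : ℝ) * ((n:ℝ) + t + 1) / ((n:ℝ) + t + 1 - k) := by
      field_simp [hpos3.ne']
      linarith [hidR]
      
    have : Real.log (((n + t + 1).choose k : ℝ)) =
        Real.log (((n + t).choose k : ℝ)) + Real.log ((n:ℝ) + t + 1)
          - Real.log ((n:ℝ) + t + 1 - k) := by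
      rw [heq, Real.log_div (by positivity) hpos3.ne', Real.log_mul hpos1.ne' hpos2.ne']
    rw [show n + (t + 1) = n + t + 1 from rfl, this, ih, Finset.sum_range_succ,
      show (n:ℝ) + 1 + (t:ℝ) = (n:ℝ) + t + 1 by ring,
      show (n:ℝ) - (k:ℝ) + 1 + (t:ℝ) = (n:ℝ) + t + 1 - (k:ℝ) by ring]
    ring

/-- The Euler characteristic of the Kronecker moduli space `M^m_{d,d+1}`,
as a real number:
`χ_d = (m / ((d+1)·((m-1)·d + m))) · C((m-1)²·d + (m-1)·m, d)`. -/
noncomputable def kroneckerEuler (m d : ℕ) : ℝ :=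
  ((m : ℝ) / ((d + 1) * (((m : ℝ) - 1) * d + m))) *
    (Nat.choose ((m - 1) ^ 2 * d + (m - 1) * m) d : ℝ)

/-- For `m ≥ 3`, the sequence `(ln χ_d)/d` converges as `d → ∞`, with limit
`(m-1)²·ln((m-1)²) − (m²−2m)·ln(m²−2m)`. -/
theorem kronecker_euler_log_limit (m : ℕ) (hm : 3 ≤ m) :
    Tendsto (fun d : ℕ => Real.log (kroneckerEuler m d) / d) atTop
      (nhds (((m : ℝ) - 1) ^ 2 * Real.log (((m : ℝ) - 1) ^ 2) -
        ((m : ℝ) ^ 2 - 2 * m) * Real.log ((m : ℝ) ^ 2 - 2 * m))) := by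
  set a : ℕ := (m - 1) ^ 2 with ha_def
  set c : ℕ := (m - 1) * m with hc_def
  have ha4 : 4 ≤ a := by
    have : 2 ≤ m - 1 := by omega
    calc 4 = 2 ^ 2 := by norm_num
    _ ≤ (m - 1) ^ 2 := Nat.pow_le_pow_left this 2
  have haR : ((a:ℕ):ℝ) = ((m:ℝ) - 1) ^ 2 := by
    rw [ha_def]
    push_cast [Nat.cast_sub (by omega : 1 ≤ m)]
    ring
  have haR4 : (4:ℝ) ≤ (a:ℝ) := by exact_mod_cast ha4
  have haR1 : (0:ℝ) < (a:ℝ) - 1 := by linarith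
  have haR0 : (0:ℝ) < (a:ℝ) := by linarith
  -- the log of the binomial coefficient
  set g : ℕ → ℝ := fun d => Real.log ((a * d + c).choose d : ℝ) with hg_def
  have hle : ∀ d : ℕ, d ≤ a * d + c := fun d =>
    le_trans (Nat.le_mul_of_pos_left d (by omega)) (Nat.le_add_right _ _)
  have hchoosepos : ∀ d : ℕ, (0:ℝ) < ((a * d + c).choose d : ℝ) := fun d => by
    exact_mod_cast Nat.choose_pos (hle d)
  -- the step sequence
  set S : ℕ → ℝ := fun d =>
    (Real.log ((a:ℝ) * d + c + 1) - Real.log ((d:ℝ) + 1)) +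
      ∑ j ∈ Finset.range (a - 1),
        (Real.log ((a:ℝ) * d + c + 2 + j) - Real.log (((a:ℝ) - 1) * d + c + 1 + j))
    with hS_def
  -- Claim 1 : g (d+1) = g d + S d
  have claim1 : ∀ d : ℕ, g (d + 1) = g d + S d := by
    intro d
    set N : ℕ := a * d + c with hN_def
    have hNd : d ≤ N := hle d
    have harg : a * (d + 1) + c = (N + 1) + (a - 1) := by
      obtain ⟨b, hb⟩ : ∃ b, a = b + 1 := ⟨a - 1, by omega⟩
      rw [hN_def]
      simp only [hb, Nat.add_sub_cancel]
      ring
    have hstep1 : Real.log (((N + 1).choose (d + 1) : ℝ)) =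
        Real.log ((N.choose d : ℝ)) + Real.log ((N:ℝ) + 1) - Real.log ((d:ℝ) + 1) := by
      have hid := Nat.add_one_mul_choose_eq N d
      have hidR : ((N:ℝ) + 1) * (N.choose d : ℝ) =
          ((N + 1).choose (d + 1) : ℝ) * ((d:ℝ) + 1) := by exact_mod_cast hid
      have hp1 : (0:ℝ) < (N.choose d : ℝ) := by exact_mod_cast Nat.choose_pos hNd
      have heq : ((N + 1).choose (d + 1) : ℝ) =
          (N.choose d : ℝ) * ((N:ℝ) + 1) / ((d:ℝ) + 1) := by
        field_simp
        linarith [hidR]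
      rw [heq, Real.log_div (by positivity) (by positivity),
        Real.log_mul hp1.ne' (by positivity)]
    have hstep2 := KE.log_choose_add (d + 1) (N + 1) (by omega) (a - 1)
    have hgd1 : g (d + 1) = Real.log (((N + 1 + (a - 1)).choose (d + 1) : ℝ)) := by
      rw [hg_def]; simp only [harg]
    rw [hgd1, hstep2, hstep1]
    have hNR : (N:ℝ) = (a:ℝ) * d + c := by rw [hN_def]; push_cast; ring
    rw [hS_def, hg_def]
    simp only [hN_def]
    push_cast
    rw [show ∀ x, Finset.range x = Finset.range x from fun _ => rfl]
    have hsum : ∀ j ∈ Finset.range (a - 1),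
        (Real.log (((a:ℝ) * d + (c:ℝ)) + 1 + 1 + (j:ℝ))
          - Real.log (((a:ℝ) * d + (c:ℝ)) + 1 - ((d:ℝ) + 1) + 1 + (j:ℝ)))
        = (Real.log ((a:ℝ) * d + c + 2 + j)
            - Real.log (((a:ℝ) - 1) * d + c + 1 + j)) := by
      intro j _
      rw [show ((a:ℝ) * d + (c:ℝ)) + 1 + 1 + (j:ℝ) = (a:ℝ) * d + c + 2 + j by ring,
        show ((a:ℝ) * d + (c:ℝ)) + 1 - ((d:ℝ) + 1) + 1 + (j:ℝ)
          = ((a:ℝ) - 1) * d + c + 1 + j by ring]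
    rw [Finset.sum_congr rfl hsum]
    ring
  -- Claim 2 : S tends to L
  set L : ℝ := (a:ℝ) * Real.log (a:ℝ) - ((a:ℝ) - 1) * Real.log ((a:ℝ) - 1) with hL_def
  have claim2 : Tendsto S atTop (𝓝 L) := by
    have hterm1 : Tendsto (fun d : ℕ => Real.log ((a:ℝ) * d + c + 1) - Real.log ((d:ℝ) + 1))
        atTop (𝓝 (Real.log (a:ℝ))) := by
      have hratio := (KE.ratio (a:ℝ) ((c:ℝ) + 1) 1 1 one_pos).log (by
        simp only [div_one]; exact haR0.ne')
      rw [div_one] at hratio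
      refine hratio.congr fun d => ?_
      rw [Real.log_div (by positivity) (by positivity),
        show (a:ℝ) * d + ((c:ℝ) + 1) = (a:ℝ) * d + c + 1 by ring,
        show (1:ℝ) * d + 1 = (d:ℝ) + 1 by ring]
    have hterm2 : ∀ j : ℕ, Tendsto (fun d : ℕ =>
        Real.log ((a:ℝ) * d + c + 2 + j) - Real.log (((a:ℝ) - 1) * d + c + 1 + j))
        atTop (𝓝 (Real.log ((a:ℝ) / ((a:ℝ) - 1)))) := by
      intro j
      have hratio := (KE.ratio (a:ℝ) ((c:ℝ) + 2 + j) ((a:ℝ) - 1) ((c:ℝ) + 1 + j) haR1).log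
        (by positivity)
      refine hratio.congr fun d => ?_
      rw [Real.log_div (by positivity) (by positivity),
        show (a:ℝ) * d + ((c:ℝ) + 2 + j) = (a:ℝ) * d + c + 2 + j by ring,
        show ((a:ℝ) - 1) * d + ((c:ℝ) + 1 + j) = ((a:ℝ) - 1) * d + c + 1 + j by ring]
    have hsum : Tendsto (fun d : ℕ => ∑ j ∈ Finset.range (a - 1),
        (Real.log ((a:ℝ) * d + c + 2 + j) - Real.log (((a:ℝ) - 1) * d + c + 1 + j)))
        atTop (𝓝 (∑ _j ∈ Finset.range (a - 1), Real.log ((a:ℝ) / ((a:ℝ) - 1)))) :=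
      tendsto_finset_sum _ (fun j _ => hterm2 j)
    have htotal := hterm1.add hsum
    have hLval : Real.log (a:ℝ) + ∑ _j ∈ Finset.range (a - 1),
        Real.log ((a:ℝ) / ((a:ℝ) - 1)) = L := by
      rw [Finset.sum_const, Finset.card_range, nsmul_eq_mul,
        Real.log_div haR0.ne' haR1.ne',
        show ((a - 1 : ℕ):ℝ) = (a:ℝ) - 1 by
          push_cast [Nat.cast_sub (by omega : 1 ≤ a)]; ring, hL_def]
      ring
    rw [← hLval]
    exact htotal
  -- Cesàro
  have hg0 : g 0 = 0 := by
    rw [hg_def]; simp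
  have hces := claim2.cesaro
  have hgd : Tendsto (fun d : ℕ => g d / d) atTop (𝓝 L) := by
    refine hces.congr fun n => ?_
    have : ∑ i ∈ Finset.range n, S i = g n - g 0 := by
      rw [← Finset.sum_range_sub (f := g) n]
      refine Finset.sum_congr rfl fun i _ => ?_
      rw [claim1 i]
      ring
    rw [this, hg0, sub_zero, inv_mul_eq_div]
  -- the prefactor
  have hmR : (3:ℝ) ≤ (m:ℝ) := by exact_mod_cast hm
  have hpref : ∀ d : ℕ, Real.log (kroneckerEuler m d) =
      Real.log (m:ℝ) - Real.log ((d:ℝ) + 1) - Real.log (((m:ℝ) - 1) * d + m) + g d := by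
    intro d
    have h1 : (0:ℝ) < (m:ℝ) := by linarith
    have h2 : (0:ℝ) < (d:ℝ) + 1 := by positivity
    have h3 : (0:ℝ) < ((m:ℝ) - 1) * d + m := by
      have hd0 : (0:ℝ) ≤ ((m:ℝ) - 1) * d :=
        mul_nonneg (by linarith) (Nat.cast_nonneg d)
      linarith
    have h23 : (0:ℝ) < ((d:ℝ) + 1) * (((m:ℝ) - 1) * d + m) := mul_pos h2 h3
    have hprefpos : (0:ℝ) < (m:ℝ) / (((d:ℝ) + 1) * (((m:ℝ) - 1) * d + m)) :=
      div_pos h1 h23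
    rw [kroneckerEuler, hg_def]
    rw [show (m - 1) ^ 2 * d + (m - 1) * m = a * d + c from rfl]
    rw [Real.log_mul hprefpos.ne' (hchoosepos d).ne',
      Real.log_div h1.ne' h23.ne', Real.log_mul h2.ne' h3.ne']
    ring
  have hz1 : Tendsto (fun d : ℕ => Real.log (m:ℝ) / d) atTop (𝓝 0) :=
    tendsto_const_div_atTop_nhds_zero_nat _
  have hz2 : Tendsto (fun d : ℕ => Real.log ((d:ℝ) + 1) / d) atTop (𝓝 0) := by
    have := KE.log_linear_div 1 1 one_pos
    simpa using this
  have hz3 : Tendsto (fun d : ℕ => Real.log (((m:ℝ) - 1) * d + m) / d) atTop (𝓝 0) :=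
    KE.log_linear_div ((m:ℝ) - 1) (m:ℝ) (by linarith)
  have hmain : Tendsto (fun d : ℕ => Real.log (kroneckerEuler m d) / d) atTop (𝓝 L) := by
    have h := ((hz1.sub hz2).sub hz3).add hgd
    have h' : Tendsto (fun d : ℕ =>
        (Real.log (m:ℝ) / d - Real.log ((d:ℝ) + 1) / d
          - Real.log (((m:ℝ) - 1) * d + m) / d) + g d / d) atTop (𝓝 (0 - 0 - 0 + L)) := h
    simp only [sub_zero, zero_sub, neg_zero, zero_add] at h'
    refine h'.congr fun d => ?_
    rw [hpref d]
    ring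
  have hfinal : L = ((m : ℝ) - 1) ^ 2 * Real.log (((m : ℝ) - 1) ^ 2) -
      ((m : ℝ) ^ 2 - 2 * m) * Real.log ((m : ℝ) ^ 2 - 2 * m) := by
    rw [hL_def, haR, show ((m:ℝ) - 1) ^ 2 - 1 = (m:ℝ) ^ 2 - 2 * m by ring]
  rw [← hfinal]
  exact hmain
end

section
/- Let m ≥ 2 be a natural number and let y be a formal power series over ℚ in the variable X with constant coefficient 0 satisfying the functional equation y = X·(1 + y^(m-1))^(m-1). Then for every n ≥ 1 and every natural number m' with 1 ≤ m' = m: if n ≥ m and (m-1) divides n−m, then n · (coefficient of X^n in y^m) = m · C(n·(m-1), (n−m)/(m-1)); otherwise the coefficient of X^n in y^m is 0. -/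
open PowerSeries

private lemma res_aux (u : PowerSeries ℚ) (hu : constantCoeff u ≠ 0) (s : ℕ) :
    coeff (s + 1) (u⁻¹ ^ (s + 2) * (u + X * d⁄dX ℚ u)) = 0 := by
  set w := u⁻¹ with hwdef
  have huw : u * w = 1 := PowerSeries.mul_inv_cancel u hu
  have h1 : w ^ (s + 2) * (u + X * d⁄dX ℚ u)
      = w ^ (s + 1) + X * (d⁄dX ℚ u * w ^ (s + 2)) := by
    have h2 : w ^ (s + 2) * u = w ^ (s + 1) := by
      rw [pow_succ, mul_assoc, mul_comm w u, huw, mul_one]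
    calc w ^ (s + 2) * (u + X * d⁄dX ℚ u)
        = w ^ (s + 2) * u + X * (d⁄dX ℚ u * w ^ (s + 2)) := by ring
      _ = _ := by rw [h2]
  have hDw : d⁄dX ℚ w = -w ^ 2 * d⁄dX ℚ u := by
    rw [hwdef]; exact derivative_inv' u
  have h3 : d⁄dX ℚ (w ^ (s + 1)) = -((s + 1 : ℕ) • (d⁄dX ℚ u * w ^ (s + 2))) := by
    rw [Derivation.leibniz_pow, hDw]
    simp only [smul_eq_mul, Nat.add_sub_cancel, nsmul_eq_mul]
    ring
  have h4 : coeff s (d⁄dX ℚ (w ^ (s + 1)))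
      = coeff (s + 1) (w ^ (s + 1)) * (s + 1) := coeff_derivative _ s
  have h5 : coeff s (d⁄dX ℚ (w ^ (s + 1)))
      = -((s + 1 : ℚ) * coeff s (d⁄dX ℚ u * w ^ (s + 2))) := by
    rw [h3, map_neg, map_nsmul]
    ring
  have h6 : coeff s (d⁄dX ℚ u * w ^ (s + 2))
      = -coeff (s + 1) (w ^ (s + 1)) := by
    have hne : (s + 1 : ℚ) ≠ 0 := by positivity
    have h7 := h4.symm.trans h5
    refine mul_left_cancel₀ hne ?_
    linarith [h7]
  rw [h1, map_add, coeff_succ_X_mul, h6]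
  ring


/-- Let `m ≥ 2` and let `y` be a formal power series over `ℚ` with constant
coefficient `0` satisfying `y = X·(1 + y^(m-1))^(m-1)`. Then for every `n ≥ 1`:
if `n ≥ m` and `(m-1) ∣ n - m`, then
`n · [Xⁿ](y^m) = m · C(n·(m-1), (n−m)/(m-1))`, and otherwise `[Xⁿ](y^m) = 0`. -/
theorem coeff_pow_of_functional_equation (m : ℕ) (hm : 2 ≤ m)
    (y : PowerSeries ℚ) (hy0 : constantCoeff y = 0)
    (hy : y = X * (1 + y ^ (m - 1)) ^ (m - 1)) :
    ∀ n : ℕ, 1 ≤ n →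
      if m ≤ n ∧ (m - 1) ∣ (n - m) then
        (n : ℚ) * coeff n (y ^ m) = (m : ℚ) * Nat.choose (n * (m - 1)) ((n - m) / (m - 1))
      else coeff n (y ^ m) = 0 := by
  intro n hn
  set t := m - 1 with htdef
  have ht : 1 ≤ t := by omega
  have ht0 : t ≠ 0 := by omega
  have hmt : m = t + 1 := by omega
  set u : PowerSeries ℚ := (1 + y ^ t) ^ t with hu
  have hyu : y = X * u := hy
  have hyt0 : constantCoeff (y ^ t) = 0 := by rw [map_pow, hy0, zero_pow ht0]
  have hu0 : constantCoeff u = 1 := by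
    rw [hu, map_pow, map_add, map_one, hyt0, add_zero, one_pow]
  have hu0' : constantCoeff u ≠ 0 := by rw [hu0]; exact one_ne_zero
  set w : PowerSeries ℚ := u⁻¹ with hwdef
  have huw : u * w = 1 := PowerSeries.mul_inv_cancel u hu0'
  have hw0 : constantCoeff w = 1 := by
    rw [hwdef, PowerSeries.constantCoeff_inv, hu0, inv_one]
  set Dy : PowerSeries ℚ := d⁄dX ℚ y with hDydef
  have hDy : Dy = u + X * d⁄dX ℚ u := by
    rw [hDydef]
    nth_rewrite 1 [hyu]
    rw [Derivation.leibniz, derivative_X, smul_eq_mul, smul_eq_mul, mul_one]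
    ring
  have hDy0 : constantCoeff Dy = 1 := by
    rw [hDy, map_add, map_mul, constantCoeff_X, zero_mul, add_zero, hu0]
  -- binomial expansion of u ^ n
  have hun : u ^ n = ∑ j ∈ Finset.range (n * t + 1),
      C (((n * t).choose j : ℚ)) * (y ^ t) ^ j := by
    rw [hu, ← pow_mul, mul_comm t n, add_comm (1 : PowerSeries ℚ), add_pow]
    refine Finset.sum_congr rfl fun j _ => ?_
    rw [one_pow, mul_one, map_natCast]
    ring
  have hpow1 : u ^ n * w ^ n = 1 := by rw [← mul_pow, huw, one_pow]
  -- key expansion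
  have hS : y ^ t * Dy = ∑ j ∈ Finset.range (n * t + 1),
      C (((n * t).choose j : ℚ)) *
        (X ^ (t * j + t) * (u ^ (t * j + t) * (w ^ n * Dy))) := by
    have h1 : y ^ t * Dy = u ^ n * (w ^ n * (y ^ t * Dy)) := by
      rw [← mul_assoc, hpow1, one_mul]
    rw [h1, hun, Finset.sum_mul]
    refine Finset.sum_congr rfl fun j _ => ?_
    have hyp : (y ^ t) ^ j * y ^ t = X ^ (t * j + t) * u ^ (t * j + t) := by
      rw [← pow_mul, ← pow_add, hyu, mul_pow]
    calc C (((n * t).choose j : ℚ)) * (y ^ t) ^ j * (w ^ n * (y ^ t * Dy))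
        = C (((n * t).choose j : ℚ)) * (((y ^ t) ^ j * y ^ t) * (w ^ n * Dy)) := by
          ring
      _ = _ := by rw [hyp]; ring
  -- per-term coefficient
  have hterm : ∀ j : ℕ,
      coeff (n - 1) (X ^ (t * j + t) * (u ^ (t * j + t) * (w ^ n * Dy)))
        = if t * j + m = n then 1 else 0 := by
    intro j
    rw [coeff_X_pow_mul']
    by_cases hle : t * j + t ≤ n - 1
    · rw [if_pos hle]
      have hen : t * j + t ≤ n := by omega
      have hw' : u ^ (t * j + t) * (w ^ n * Dy) = w ^ (n - (t * j + t)) * Dy := by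
        have : w ^ n = w ^ (t * j + t) * w ^ (n - (t * j + t)) := by
          rw [← pow_add]
          congr 1
          omega
        rw [this, ← mul_assoc, ← mul_assoc, ← mul_pow, huw, one_pow, one_mul]
      rw [hw']
      rcases Nat.eq_or_lt_of_le hle with heq | hlt
      · have h1 : n - 1 - (t * j + t) = 0 := by omega
        have h2 : n - (t * j + t) = 1 := by omega
        have h3 : t * j + m = n := by omega
        rw [h1, h2, if_pos h3, pow_one, coeff_zero_eq_constantCoeff, map_mul, hw0, hDy0,
          one_mul]
      · have h3 : ¬ (t * j + m = n) := by omega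
        rw [if_neg h3]
        obtain ⟨s, hs⟩ : ∃ s, n - 1 - (t * j + t) = s + 1 :=
          ⟨n - 1 - (t * j + t) - 1, by omega⟩
        have h2 : n - (t * j + t) = s + 2 := by omega
        rw [hs, h2, hDy]
        exact res_aux u hu0' s
    · rw [if_neg hle, if_neg (by omega)]
  -- evaluate the coefficient of the sum
  have hcoeff : coeff (n - 1) (y ^ t * Dy)
      = if m ≤ n ∧ t ∣ (n - m) then (((n * t).choose ((n - m) / t)) : ℚ) else 0 := by
    rw [hS, map_sum]
    have hsum : ∀ j ∈ Finset.range (n * t + 1),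
        coeff (n - 1) (C (((n * t).choose j : ℚ)) *
          (X ^ (t * j + t) * (u ^ (t * j + t) * (w ^ n * Dy))))
        = if t * j + m = n then (((n * t).choose j : ℚ)) else 0 := by
      intro j _
      rw [coeff_C_mul, hterm j]
      split_ifs <;> ring
    rw [Finset.sum_congr rfl hsum]
    by_cases hcond : m ≤ n ∧ t ∣ (n - m)
    · obtain ⟨hmn, k, hk⟩ := hcond
      have hiff : ∀ j : ℕ, (t * j + m = n) ↔ j = k := by
        intro j
        constructor
        · intro h
          have : t * j = t * k := by omega
          exact Nat.eq_of_mul_eq_mul_left (by omega) this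
        · rintro rfl; omega
      have hk' : (n - m) / t = k := by
        rw [hk, Nat.mul_div_cancel_left _ (by omega)]
      rw [if_pos ⟨hmn, k, hk⟩, hk']
      have hmem : k ∈ Finset.range (n * t + 1) := by
        have : k ≤ t * k := Nat.le_mul_of_pos_left k (by omega)
        have : t * k ≤ n * t := by
          calc t * k = n - m := hk.symm
            _ ≤ n := by omega
            _ ≤ n * t := Nat.le_mul_of_pos_right n (by omega)
        simp only [Finset.mem_range]
        omega
      calc (∑ j ∈ Finset.range (n * t + 1),
              if t * j + m = n then (((n * t).choose j : ℚ)) else 0)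
          = ∑ j ∈ Finset.range (n * t + 1),
              if j = k then (((n * t).choose j : ℚ)) else 0 := by
            refine Finset.sum_congr rfl fun j _ => ?_
            simp only [hiff j]
        _ = (((n * t).choose k : ℚ)) := by
            rw [Finset.sum_ite_eq' _ k fun j => (((n * t).choose j : ℚ))]
            rw [if_pos hmem]
    · rw [if_neg hcond]
      refine Finset.sum_eq_zero fun j _ => ?_
      rw [if_neg]
      intro h
      exact hcond ⟨by omega, ⟨j, by omega⟩⟩
  -- assemble
  have hD1 : coeff (n - 1) (d⁄dX ℚ (y ^ m)) = (n : ℚ) * coeff n (y ^ m) := by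
    rw [coeff_derivative]
    have h1 : n - 1 + 1 = n := by omega
    have h2 : ((n - 1 : ℕ) : ℚ) + 1 = n := by
      rw [Nat.cast_sub hn]; ring
    rw [h1, h2]; ring
  have hD2 : d⁄dX ℚ (y ^ m) = m • (y ^ t * Dy) := by
    rw [Derivation.leibniz_pow, hDydef, show m - 1 = t from rfl]
    simp only [smul_eq_mul]
  have hfinal : (n : ℚ) * coeff n (y ^ m)
      = (m : ℚ) * (if m ≤ n ∧ t ∣ (n - m) then (((n * t).choose ((n - m) / t)) : ℚ) else 0) := by
    rw [← hD1, hD2, map_nsmul, hcoeff, nsmul_eq_mul]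
  by_cases hcond : m ≤ n ∧ t ∣ (n - m)
  · rw [if_pos hcond]
    rw [hfinal, if_pos hcond]
  · rw [if_neg hcond]
    rw [if_neg hcond, mul_zero] at hfinal
    have hn0 : (n : ℚ) ≠ 0 := Nat.cast_ne_zero.mpr (by omega)
    exact (mul_eq_zero.mp hfinal).resolve_left hn0
end

section
/- (Lagrange inversion) Let K be a field of characteristic zero, let φ be a formal power series over K in the variable u with nonzero constant coefficient, and let y be a formal power series over K in x with constant coefficient 0 satisfying y = X·(φ substituted at y). Then: (1) for every formal power series g over K and every n ≥ 1, n · (coefficient of x^n in g substituted at y) = coefficient of u^(n−1) in g′·φ^n, where g′ is the formal derivative of g; (2) for all n ≥ m ≥ 1, n · (coefficient of x^n in y^m) = m · (coefficient of u^(n−m) in φ^n). -/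
open PowerSeries Finset

variable {K : Type*} [Field K]

/-- Composition `g(y)` of a formal power series `g` with a formal power series `y`
having constant coefficient `0`: the `n`-th coefficient of `g(y) = ∑ₖ gₖ yᵏ` is the
(finite, since `y` has positive order) sum `∑_{k ≤ n} gₖ · [Xⁿ](yᵏ)`. -/
noncomputable def PowerSeries.substInto (y g : PowerSeries K) : PowerSeries K :=
  PowerSeries.mk fun n => ∑ k ∈ Finset.range (n + 1), coeff k g * coeff n (y ^ k)


namespace LagrangeAux

theorem coeff_substInto (y g : PowerSeries K) (n : ℕ) :
    coeff n (PowerSeries.substInto y g)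
      = ∑ k ∈ Finset.range (n + 1), coeff k g * coeff n (y ^ k) :=
  coeff_mk _ _

theorem coeff_pow_eq_zero {y : PowerSeries K} (hy0 : constantCoeff y = 0)
    {k n : ℕ} (h : n < k) : coeff n (y ^ k) = 0 :=
  X_pow_dvd_iff.mp (pow_dvd_pow_of_dvd (X_dvd_iff.mpr hy0) k) n h

theorem substInto_one (y : PowerSeries K) : PowerSeries.substInto y 1 = 1 := by
  ext n
  rw [coeff_substInto]
  rw [Finset.sum_eq_single 0]
  · simp
  · intro b _ hb
    simp [coeff_one, hb]
  · simp

theorem substInto_trunc_dvd {y : PowerSeries K} (hy0 : constantCoeff y = 0)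
    (g : PowerSeries K) (N : ℕ) :
    (X : PowerSeries K) ^ (N + 1) ∣
      PowerSeries.substInto y g - Polynomial.aeval y (trunc (N + 1) g) := by
  rw [X_pow_dvd_iff]
  intro m hm
  rw [map_sub, sub_eq_zero, coeff_substInto,
    Polynomial.aeval_eq_sum_range' (natDegree_trunc_lt g N), map_sum]
  have h1 : ∀ i ∈ Finset.range (N + 1),
      coeff m ((trunc (N + 1) g).coeff i • y ^ i) = coeff i g * coeff m (y ^ i) := by
    intro i hi
    rw [map_smul, smul_eq_mul, coeff_trunc, if_pos (Finset.mem_range.mp hi)]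
  rw [Finset.sum_congr rfl h1]
  exact Finset.sum_subset (Finset.range_subset_range.mpr hm)
    (fun x _ hx => by
      rw [coeff_pow_eq_zero hy0 (by simpa using hx), mul_zero])

theorem dvd_mul_sub_mul {A A' B B' d : PowerSeries K}
    (h1 : d ∣ A - A') (h2 : d ∣ B - B') : d ∣ A * B - A' * B' := by
  have h : A * B - A' * B' = (A - A') * B + A' * (B - B') := by ring
  rw [h]
  exact dvd_add (h1.mul_right B) (h2.mul_left A')

theorem trunc_mul_dvd {y : PowerSeries K} (hy0 : constantCoeff y = 0)
    (f g : PowerSeries K) (N : ℕ) :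
    (X : PowerSeries K) ^ (N + 1) ∣
      Polynomial.aeval y (trunc (N + 1) (f * g)) -
        Polynomial.aeval y (trunc (N + 1) f) * Polynomial.aeval y (trunc (N + 1) g) := by
  rw [← map_mul, ← map_sub]
  have hD : (Polynomial.X : Polynomial K) ^ (N + 1) ∣
      trunc (N + 1) (f * g) - trunc (N + 1) f * trunc (N + 1) g := by
    rw [Polynomial.X_pow_dvd_iff]
    intro d hd
    rw [Polynomial.coeff_sub, sub_eq_zero, coeff_trunc, if_pos hd,
      PowerSeries.coeff_mul, Polynomial.coeff_mul]
    apply Finset.sum_congr rfl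
    intro p hp
    have hp' := Finset.HasAntidiagonal.mem_antidiagonal.mp hp
    rw [coeff_trunc, coeff_trunc, if_pos, if_pos]
    · omega
    · omega
  obtain ⟨E, hE⟩ := hD
  rw [hE, map_mul, map_pow, Polynomial.aeval_X]
  exact Dvd.dvd.mul_right (pow_dvd_pow_of_dvd (X_dvd_iff.mpr hy0) (N + 1)) _

theorem substInto_pow_dvd {y : PowerSeries K} (hy0 : constantCoeff y = 0)
    (φ : PowerSeries K) (s N : ℕ) :
    (X : PowerSeries K) ^ (N + 1) ∣
      PowerSeries.substInto y (φ ^ s) - (PowerSeries.substInto y φ) ^ s := by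
  induction s with
  | zero => simp [substInto_one]
  | succ s ih =>
      have h1 := substInto_trunc_dvd hy0 (φ ^ (s + 1)) N
      have h2 : (X : PowerSeries K) ^ (N + 1) ∣
          Polynomial.aeval y (trunc (N + 1) (φ ^ (s + 1))) -
            Polynomial.aeval y (trunc (N + 1) (φ ^ s)) * Polynomial.aeval y (trunc (N + 1) φ) := by
        have := trunc_mul_dvd hy0 (φ ^ s) φ N
        rwa [← pow_succ] at this
      have h3 : (X : PowerSeries K) ^ (N + 1) ∣
          Polynomial.aeval y (trunc (N + 1) (φ ^ s)) * Polynomial.aeval y (trunc (N + 1) φ) -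
            PowerSeries.substInto y (φ ^ s) * PowerSeries.substInto y φ :=
        dvd_mul_sub_mul ((dvd_sub_comm).mp (substInto_trunc_dvd hy0 (φ ^ s) N))
          ((dvd_sub_comm).mp (substInto_trunc_dvd hy0 φ N))
      have h4 : (X : PowerSeries K) ^ (N + 1) ∣
          PowerSeries.substInto y (φ ^ s) * PowerSeries.substInto y φ -
            (PowerSeries.substInto y φ) ^ (s + 1) := by
        rw [pow_succ]
        exact dvd_mul_sub_mul ih (by simp)
      have hsplit : PowerSeries.substInto y (φ ^ (s + 1)) - (PowerSeries.substInto y φ) ^ (s + 1)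
          = (PowerSeries.substInto y (φ ^ (s + 1)) -
              Polynomial.aeval y (trunc (N + 1) (φ ^ (s + 1))))
            + (Polynomial.aeval y (trunc (N + 1) (φ ^ (s + 1))) -
                Polynomial.aeval y (trunc (N + 1) (φ ^ s)) * Polynomial.aeval y (trunc (N + 1) φ))
            + (Polynomial.aeval y (trunc (N + 1) (φ ^ s)) * Polynomial.aeval y (trunc (N + 1) φ) -
                PowerSeries.substInto y (φ ^ s) * PowerSeries.substInto y φ)
            + (PowerSeries.substInto y (φ ^ s) * PowerSeries.substInto y φ -
                (PowerSeries.substInto y φ) ^ (s + 1)) := by ring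
      rw [hsplit]
      exact dvd_add (dvd_add (dvd_add h1 h2) h3) h4

theorem coeff_substInto_pow {y : PowerSeries K} (hy0 : constantCoeff y = 0)
    (φ : PowerSeries K) (s k : ℕ) :
    coeff k (PowerSeries.substInto y (φ ^ s)) = coeff k ((PowerSeries.substInto y φ) ^ s) := by
  have h := X_pow_dvd_iff.mp (substInto_pow_dvd hy0 φ s k) k (Nat.lt_succ_self k)
  rw [map_sub, sub_eq_zero] at h
  exact h


theorem coeff_deriv_mul (f g : PowerSeries K) (k' : ℕ) :
    coeff k' (d⁄dX K f * g)
      = ∑ j ∈ Finset.range (k' + 2), coeff j f * ((j : K) * coeff (k' + 1 - j) g) := by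
  rw [PowerSeries.coeff_mul, Finset.Nat.sum_antidiagonal_eq_sum_range_succ_mk]
  conv_rhs => rw [Finset.sum_range_succ']
  simp only [Nat.cast_zero, zero_mul, mul_zero, add_zero]
  apply Finset.sum_congr rfl
  intro i hi
  have hik := Finset.mem_range.mp hi
  rw [PowerSeries.coeff_derivative]
  have : k' + 1 - (i + 1) = k' - i := by omega
  rw [this]
  push_cast
  ring

theorem coeff_zero_substInto (y g : PowerSeries K) :
    coeff 0 (PowerSeries.substInto y g) = coeff 0 g := by
  rw [coeff_substInto]
  simp

theorem key [CharZero K] {φ y : PowerSeries K} (hy0 : constantCoeff y = 0)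
    (hy : y = X * PowerSeries.substInto y φ) :
    ∀ k s : ℕ, 1 ≤ s →
      ((s + k : ℕ) : K) * coeff (s + k) (y ^ s) = (s : K) * coeff k (φ ^ (s + k)) := by
  intro k
  induction k using Nat.strong_induction_on with
  | _ k ih =>
    intro s hs
    have hΦ : coeff (s + k) (y ^ s) = coeff k (PowerSeries.substInto y (φ ^ s)) := by
      conv_lhs => rw [hy]
      rw [mul_pow, show s + k = k + s by omega, coeff_X_pow_mul]
      exact (coeff_substInto_pow hy0 φ s k).symm
    rcases k with _ | k'
    · -- base case k = 0
      rw [hΦ, coeff_zero_substInto]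
      simp
    · -- inductive step, k = k' + 1
      have hterm : ∀ j ∈ Finset.range (k' + 2),
          ((k' + 1 : ℕ) : K) * coeff (k' + 1) (y ^ j)
            = (j : K) * coeff (k' + 1 - j) (φ ^ (k' + 1)) := by
        intro j hj
        rcases Nat.eq_zero_or_pos j with h0 | h1
        · subst h0
          simp [coeff_one]
        · have hjk : j ≤ k' + 1 := by
            have := Finset.mem_range.mp hj; omega
          have h2 := ih (k' + 1 - j) (by omega) j h1
          rwa [show j + (k' + 1 - j) = k' + 1 by omega] at h2
      have hknz : ((k' + 1 : ℕ) : K) ≠ 0 := Nat.cast_ne_zero.mpr (Nat.succ_ne_zero k')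
      apply mul_left_cancel₀ hknz
      rw [hΦ, coeff_substInto]
      rw [show k' + 1 + 1 = k' + 2 from rfl]
      obtain ⟨s'', rfl⟩ : ∃ s'', s = s'' + 1 := ⟨s - 1, by omega⟩
      have hser : (s'' + 1 + (k' + 1)) • (d⁄dX K (φ ^ (s'' + 1)) * φ ^ (k' + 1))
          = (s'' + 1) • d⁄dX K (φ ^ (s'' + 1 + (k' + 1))) := by
        rw [Derivation.leibniz_pow, Derivation.leibniz_pow,
          show s'' + 1 + (k' + 1) - 1 = s'' + (k' + 1) by omega, Nat.add_sub_cancel]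
        simp only [smul_eq_mul, nsmul_eq_mul]
        push_cast
        ring
      have hcoeff := congrArg (coeff k') hser
      rw [map_nsmul, map_nsmul, nsmul_eq_mul, nsmul_eq_mul] at hcoeff
      calc ((k' + 1 : ℕ) : K) * (((s'' + 1 + (k' + 1) : ℕ) : K) *
              ∑ j ∈ Finset.range (k' + 2), coeff j (φ ^ (s'' + 1)) * coeff (k' + 1) (y ^ j))
          = ((s'' + 1 + (k' + 1) : ℕ) : K) *
              ∑ j ∈ Finset.range (k' + 2), coeff j (φ ^ (s'' + 1)) *
                (((k' + 1 : ℕ) : K) * coeff (k' + 1) (y ^ j)) := by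
            rw [Finset.mul_sum, Finset.mul_sum, Finset.mul_sum]
            apply Finset.sum_congr rfl
            intro j hj
            ring
        _ = ((s'' + 1 + (k' + 1) : ℕ) : K) *
              ∑ j ∈ Finset.range (k' + 2), coeff j (φ ^ (s'' + 1)) *
                ((j : K) * coeff (k' + 1 - j) (φ ^ (k' + 1))) := by
            congr 1
            exact Finset.sum_congr rfl fun j hj => by rw [hterm j hj]
        _ = ((s'' + 1 + (k' + 1) : ℕ) : K) *
              coeff k' (d⁄dX K (φ ^ (s'' + 1)) * φ ^ (k' + 1)) := by
            rw [coeff_deriv_mul]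
        _ = ((k' + 1 : ℕ) : K) * (((s'' + 1 : ℕ) : K) *
              coeff (k' + 1) (φ ^ (s'' + 1 + (k' + 1)))) := by
            rw [hcoeff, PowerSeries.coeff_derivative]
            push_cast
            ring

theorem key' [CharZero K] {φ y : PowerSeries K} (hy0 : constantCoeff y = 0)
    (hy : y = X * PowerSeries.substInto y φ) {n : ℕ} (hn : 1 ≤ n) :
    ∀ j ∈ Finset.range (n + 1),
      (n : K) * coeff n (y ^ j) = (j : K) * coeff (n - j) (φ ^ n) := by
  intro j hj
  rcases Nat.eq_zero_or_pos j with h0 | h1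
  · subst h0
    rcases Nat.exists_eq_add_of_le hn with ⟨n', rfl⟩
    simp [coeff_one]
  · have hjn : j ≤ n := by
      have := Finset.mem_range.mp hj; omega
    have h2 := key hy0 hy (n - j) j h1
    rwa [show j + (n - j) = n by omega] at h2

end LagrangeAux

/-- **Lagrange inversion.** Let `K` be a field of characteristic zero, `φ` a formal
power series with nonzero constant coefficient, and `y` a power series with
constant coefficient `0` satisfying `y = X·φ(y)`. Then:
(1) for every power series `g` and every `n ≥ 1`,
    `n · [Xⁿ] g(y) = [u^(n−1)] (g′·φⁿ)`;
(2) for all `n ≥ m ≥ 1`, `n · [Xⁿ](y^m) = m · [u^(n−m)] φⁿ`. -/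
theorem lagrange_inversion [CharZero K]
    (φ : PowerSeries K) (hφ : constantCoeff φ ≠ 0)
    (y : PowerSeries K) (hy0 : constantCoeff y = 0)
    (hy : y = X * PowerSeries.substInto y φ) :
    (∀ g : PowerSeries K, ∀ n : ℕ, 1 ≤ n →
      (n : K) * coeff n (PowerSeries.substInto y g) =
        coeff (n - 1) (d⁄dX K g * φ ^ n)) ∧
    (∀ m n : ℕ, 1 ≤ m → m ≤ n →
      (n : K) * coeff n (y ^ m) = (m : K) * coeff (n - m) (φ ^ n)) := by
  constructor
  · intro g n hn
    obtain ⟨n', rfl⟩ : ∃ n', n = n' + 1 := ⟨n - 1, by omega⟩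
    rw [LagrangeAux.coeff_substInto, show n' + 1 + 1 = n' + 2 from rfl,
      show n' + 1 - 1 = n' from rfl, LagrangeAux.coeff_deriv_mul, Finset.mul_sum]
    apply Finset.sum_congr rfl
    intro j hj
    rw [← mul_assoc, mul_comm ((n' + 1 : ℕ) : K), mul_assoc,
      LagrangeAux.key' hy0 hy hn j hj]
  · intro m n hm hmn
    have h := LagrangeAux.key hy0 hy (n - m) m hm
    rwa [show m + (n - m) = n by omega] at h
end

section
/- Let K be a field of characteristic zero, a ∈ K, and b ≥ 1 a natural number. Let y be a formal power series over K in X with constant coefficient 0 satisfying y = X·(1 + a·y^b). Then for every n ≥ 1: if b divides n−1, then n · (coefficient of X^n in y) = C(n, (n−1)/b) · a^((n−1)/b); otherwise the coefficient of X^n in y is 0. -/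
open PowerSeries

/-- Key "residue" lemma: for a unit power series `u`, the coefficient of `X^(j+1)` in
`u⁻¹^(j+2) * (u + X * u')` vanishes. -/
lemma aux_residue {K : Type*} [Field K] [CharZero K] (u : PowerSeries K)
    (hu : constantCoeff u ≠ 0) (j : ℕ) :
    coeff (j + 1) (u⁻¹ ^ (j + 2) * (u + X * d⁄dX K u)) = 0 := by
  have hui : u * u⁻¹ = 1 := PowerSeries.mul_inv_cancel u hu
  have e1 : u⁻¹ ^ (j + 2) * u = u⁻¹ ^ (j + 1) := by
    have : u⁻¹ ^ (j + 2) * u = u⁻¹ ^ (j + 1) * (u * u⁻¹) := by ring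
    rw [this, hui, mul_one]
  have split : u⁻¹ ^ (j + 2) * (u + X * d⁄dX K u)
      = u⁻¹ ^ (j + 1) + X * (u⁻¹ ^ (j + 2) * d⁄dX K u) := by
    rw [mul_add, e1]; ring_nf
  -- derivative of u⁻¹^(j+1)
  have hder : d⁄dX K (u⁻¹ ^ (j + 1)) = -((j + 1) • (u⁻¹ ^ (j + 2) * d⁄dX K u)) := by
    have hstep : u⁻¹ ^ j • d⁄dX K u⁻¹ = u⁻¹ ^ j * (-u⁻¹ ^ 2 * d⁄dX K u) := by
      rw [derivative_inv', smul_eq_mul]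
    rw [Derivation.leibniz_pow, Nat.add_sub_cancel, hstep, ← smul_neg]
    exact congrArg _ (by ring)
  set c : K := coeff (j + 1) (u⁻¹ ^ (j + 1)) with hc
  set t : K := coeff j (u⁻¹ ^ (j + 2) * d⁄dX K u) with ht
  have h1 : coeff j (d⁄dX K (u⁻¹ ^ (j + 1))) = c * (j + 1) := coeff_derivative _ _
  have h2 : coeff j (d⁄dX K (u⁻¹ ^ (j + 1))) = -((j + 1 : ℕ) * t) := by
    rw [hder, map_neg, map_nsmul, nsmul_eq_mul]
    try push_cast
    try ring
  have hct : c * ((j : K) + 1) = -(((j : K) + 1) * t) := by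
    rw [← h1, h2]; push_cast; ring
  have key : ((j : K) + 1) * (c + t) = 0 := by
    rw [mul_add]
    have : ((j : K) + 1) * c = c * ((j : K) + 1) := by ring
    rw [this, hct]; ring
  have hj1 : ((j : K) + 1) ≠ 0 := by
    exact_mod_cast (Nat.cast_ne_zero (R := K)).2 (Nat.succ_ne_zero j)
  have hc0 : c + t = 0 := by
    rcases mul_eq_zero.mp key with h | h
    · exact absurd h hj1
    · exact h
  rw [split, map_add, coeff_succ_X_mul, ← hc, ← ht, hc0]

/-- Let `K` be a field of characteristic zero, `a ∈ K`, `b ≥ 1`, and let `y` be a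
formal power series over `K` with constant coefficient `0` satisfying
`y = X·(1 + a·y^b)`. Then for every `n ≥ 1`: if `b ∣ n−1` then
`n · [Xⁿ] y = C(n, (n−1)/b) · a^((n−1)/b)`, and otherwise `[Xⁿ] y = 0`. -/
theorem coeff_of_functional_equation {K : Type*} [Field K] [CharZero K]
    (a : K) (b : ℕ) (hb : 1 ≤ b)
    (y : PowerSeries K) (hy0 : constantCoeff y = 0)
    (hy : y = X * (1 + C a * y ^ b)) :
    ∀ n : ℕ, 1 ≤ n →
      if b ∣ (n - 1) then
        (n : K) * coeff n y = (Nat.choose n ((n - 1) / b) : K) * a ^ ((n - 1) / b)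
      else coeff n y = 0 := by
  intro n hn
  obtain ⟨m, rfl⟩ : ∃ m, n = m + 1 := ⟨n - 1, (Nat.succ_pred_eq_of_pos hn).symm⟩
  set u : PowerSeries K := 1 + C a * y ^ b with hu_def
  have hyu : y = X * u := hy
  have hb0 : b ≠ 0 := by omega
  have hcu : constantCoeff u = 1 := by
    simp [hu_def, map_pow, hy0, zero_pow hb0]
  have hcu0 : constantCoeff u ≠ 0 := by rw [hcu]; exact one_ne_zero
  have hui : u * u⁻¹ = 1 := PowerSeries.mul_inv_cancel u hcu0
  have hccui : constantCoeff u⁻¹ = 1 := by rw [constantCoeff_inv, hcu, inv_one]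
  have hDy : d⁄dX K y = u + X * d⁄dX K u := by
    rw [hyu, Derivation.leibniz]
    simp only [smul_eq_mul, derivative_X, mul_one]
    ring
  have hc1 : coeff 1 y = 1 := by
    rw [hyu, coeff_succ_X_mul, coeff_zero_eq_constantCoeff, hcu]
  have hcDy : constantCoeff (d⁄dX K y) = 1 := by
    rw [← coeff_zero_eq_constantCoeff]
    rw [coeff_derivative, hc1]
    norm_num
  -- binomial expansion of u^(m+1)
  have hbin : u ^ (m + 1) =
      ∑ k ∈ Finset.range (m + 2), (C a * y ^ b) ^ k * ((m + 1).choose k : PowerSeries K) := by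
    have := add_pow (C a * y ^ b) (1 : PowerSeries K) (m + 1)
    rw [hu_def, add_comm (1 : PowerSeries K)]
    simpa using this
  have hxpow : ∀ k : ℕ, y ^ (b * k) = X ^ (b * k) * u ^ (b * k) := by
    intro k; rw [hyu, mul_pow]
  -- main expansion
  have expand : d⁄dX K y = ∑ k ∈ Finset.range (m + 2),
      ((m + 1).choose k : PowerSeries K) * ((C a) ^ k *
        (X ^ (b * k) * (u ^ (b * k) * (u⁻¹ ^ (m + 1) * d⁄dX K y)))) := by
    have h1 : u ^ (m + 1) * u⁻¹ ^ (m + 1) = 1 := by rw [← mul_pow, hui, one_pow]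
    calc d⁄dX K y = u ^ (m + 1) * (u⁻¹ ^ (m + 1) * d⁄dX K y) := by
          rw [← mul_assoc, h1, one_mul]
      _ = _ := by
          rw [hbin, Finset.sum_mul]
          refine Finset.sum_congr rfl fun k _ => ?_
          rw [mul_pow, ← pow_mul, hxpow k]
          ring
  have coeffm : coeff m (d⁄dX K y) = ∑ k ∈ Finset.range (m + 2),
      (if b * k = m then ((m + 1).choose k : K) * a ^ k else 0) := by
    rw [expand, map_sum]
    refine Finset.sum_congr rfl fun k _ => ?_
    have hcast : ((m + 1).choose k : PowerSeries K) * ((C a) ^ k *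
        (X ^ (b * k) * (u ^ (b * k) * (u⁻¹ ^ (m + 1) * d⁄dX K y))))
        = C (((m + 1).choose k : K) * a ^ k) *
          (X ^ (b * k) * (u ^ (b * k) * (u⁻¹ ^ (m + 1) * d⁄dX K y))) := by
      rw [map_mul, ← map_pow, ← mul_assoc, ← map_natCast C ((m + 1).choose k)]
    rw [hcast, coeff_C_mul, coeff_X_pow_mul']
    rcases lt_trichotomy (b * k) m with hlt | heq | hgt
    · -- b*k < m : residue lemma kills the term
      rw [if_neg (by omega : ¬ b * k = m), if_pos (by omega : b * k ≤ m)]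
      obtain ⟨j, hj⟩ : ∃ j, m - b * k = j + 1 := ⟨m - b * k - 1, by omega⟩
      have hmk : m + 1 = b * k + (j + 2) := by omega
      have hcollapse : u ^ (b * k) * (u⁻¹ ^ (m + 1) * d⁄dX K y)
          = u⁻¹ ^ (j + 2) * (u + X * d⁄dX K u) := by
        rw [← hDy, hmk, pow_add, ← mul_assoc, ← mul_assoc, ← mul_pow, hui, one_pow, one_mul]
      rw [hcollapse, hj, aux_residue u hcu0 j, mul_zero]
    · -- b*k = m : constant coefficient is 1
      rw [if_pos heq, if_pos (le_of_eq heq), heq, Nat.sub_self,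
        coeff_zero_eq_constantCoeff]
      simp only [map_mul, map_pow, hcu, hccui, hcDy, one_pow, mul_one, one_mul]
    · -- b*k > m : X-power too big
      rw [if_neg (by omega : ¬ b * k = m), if_neg (by omega : ¬ b * k ≤ m), mul_zero]
  have hmain : ((m + 1 : ℕ) : K) * coeff (m + 1) y = ∑ k ∈ Finset.range (m + 2),
      (if b * k = m then ((m + 1).choose k : K) * a ^ k else 0) := by
    rw [← coeffm, coeff_derivative]
    push_cast
    ring
  simp only [Nat.add_sub_cancel]
  by_cases hdvd : b ∣ m
  · rw [if_pos hdvd]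
    set k0 := m / b with hk0
    have hbk0 : b * k0 = m := Nat.mul_div_cancel' hdvd
    have hk0mem : k0 ∈ Finset.range (m + 2) := by
      refine Finset.mem_range.mpr ?_
      have : k0 ≤ m := Nat.div_le_self m b
      omega
    have hsum : ∑ k ∈ Finset.range (m + 2),
        (if b * k = m then ((m + 1).choose k : K) * a ^ k else 0)
        = ((m + 1).choose k0 : K) * a ^ k0 := by
      rw [Finset.sum_eq_single k0]
      · rw [if_pos hbk0]
      · intro k _ hk
        rw [if_neg]
        intro hbk
        exact hk (Nat.eq_of_mul_eq_mul_left (by omega) (hbk.trans hbk0.symm))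
      · intro h; exact absurd hk0mem h
    rw [hmain, hsum]
  · rw [if_neg hdvd]
    have hsum : ∑ k ∈ Finset.range (m + 2),
        (if b * k = m then ((m + 1).choose k : K) * a ^ k else 0) = 0 := by
      refine Finset.sum_eq_zero fun k _ => ?_
      rw [if_neg]
      intro hbk
      exact hdvd ⟨k, hbk.symm⟩
    have := hmain
    rw [hsum] at this
    have hne : ((m + 1 : ℕ) : K) ≠ 0 := Nat.cast_ne_zero.2 (Nat.succ_ne_zero m)
    rcases mul_eq_zero.mp this with h | h
    · exact absurd h hne
    · exact h
end

section
/- Let a > 0 be a real number and b ≥ 2 a natural number. Suppose x₀, y₀ are positive real numbers satisfying the system y₀ = x₀·(1 + a·y₀^b) and 1 = x₀·a·b·y₀^(b−1). Then x₀⁻¹ = a·b·(1/((b−1)·a))^((b−1)/b), where the outer exponent is a real-number power (rpow). -/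
/-- Let `a > 0` be real and `b ≥ 2` a natural number. If `x₀, y₀ > 0` satisfy the
system `y₀ = x₀·(1 + a·y₀^b)` and `1 = x₀·a·b·y₀^(b−1)`, then
`x₀⁻¹ = a·b·(1/((b−1)·a))^((b−1)/b)` (the outer exponent being a real power). -/
theorem singularity_of_functional_equation (a : ℝ) (ha : 0 < a) (b : ℕ) (hb : 2 ≤ b)
    (x₀ y₀ : ℝ) (hx₀ : 0 < x₀) (hy₀ : 0 < y₀)
    (h1 : y₀ = x₀ * (1 + a * y₀ ^ b))
    (h2 : 1 = x₀ * a * b * y₀ ^ (b - 1)) :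
    x₀⁻¹ = a * b * (1 / (((b : ℝ) - 1) * a)) ^ (((b : ℝ) - 1) / b) := by
  have hb1 : (1:ℕ) ≤ b := le_trans (by norm_num) hb
  have hbR : (2:ℝ) ≤ (b:ℝ) := by exact_mod_cast hb
  have hbpos : (0:ℝ) < (b:ℝ) := by linarith
  have hcast : ((b - 1 : ℕ) : ℝ) = (b:ℝ) - 1 := by
    push_cast [Nat.cast_sub hb1]; ring
  have hpow : y₀ ^ (b - 1) * y₀ = y₀ ^ b := by
    rw [← pow_succ, Nat.sub_add_cancel hb1]
  -- key : a * ((b:ℝ)-1) * y₀^b = 1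
  have hy : y₀ = x₀ * a * b * y₀ ^ b := by
    calc y₀ = (x₀ * a * b * y₀ ^ (b-1)) * y₀ := by rw [← h2]; ring
    _ = x₀ * a * b * y₀ ^ b := by rw [mul_assoc, hpow]
  have key : a * ((b:ℝ) - 1) * y₀ ^ b = 1 := by
    have h4 : x₀ * (a * ((b:ℝ) - 1) * y₀ ^ b) = x₀ * 1 := by linear_combination h1 - hy
    exact mul_left_cancel₀ hx₀.ne' h4
  have hbne : ((b:ℝ) - 1) * a ≠ 0 := ne_of_gt (by nlinarith)
  have hyb : (1 / (((b : ℝ) - 1) * a)) = y₀ ^ b := by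
    rw [div_eq_iff hbne]
    linear_combination -key
  rw [hyb]
  have hy1 : (0:ℝ) ≤ y₀ := hy₀.le
  have : ((y₀ ^ b : ℝ)) ^ (((b:ℝ) - 1) / b) = y₀ ^ (b - 1) := by
    rw [← Real.rpow_natCast y₀ b, ← Real.rpow_natCast y₀ (b-1),
      ← Real.rpow_mul hy1, hcast]
    congr 1
    field_simp
  rw [this]
  have hx := hx₀.ne'
  field_simp
  linarith [h2]
end

section
/- Let m ≥ 3 be a natural number and suppose x₀, y₀ are positive real numbers satisfying the system y₀ = x₀·(1 + y₀^(m−1))^(m−1) and 1 = x₀·(m−1)²·(1 + y₀^(m−1))^(m−2)·y₀^(m−2). Then y₀^(m−1) = 1/((m−1)² − 1), and x₀⁻¹ = (m−1)^(2(m−1)) · (m²−2m)^(−(m²−2m)/(m−1)), where the last exponent is a real-number power (rpow) with exponent −(m²−2m)/(m−1) ∈ ℝ. -/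
/-- Let `m ≥ 3` and suppose `x₀, y₀ > 0` are real numbers satisfying
`y₀ = x₀·(1 + y₀^(m−1))^(m−1)` and `1 = x₀·(m−1)²·(1 + y₀^(m−1))^(m−2)·y₀^(m−2)`.
Then `y₀^(m−1) = 1/((m−1)² − 1)` and
`x₀⁻¹ = (m−1)^(2(m−1)) · (m²−2m)^(−(m²−2m)/(m−1))`, the last exponent being a
real power. -/
theorem singularity_kronecker (m : ℕ) (hm : 3 ≤ m)
    (x₀ y₀ : ℝ) (hx₀ : 0 < x₀) (hy₀ : 0 < y₀)
    (h1 : y₀ = x₀ * (1 + y₀ ^ (m - 1)) ^ (m - 1))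
    (h2 : 1 = x₀ * ((m : ℝ) - 1) ^ 2 * (1 + y₀ ^ (m - 1)) ^ (m - 2) * y₀ ^ (m - 2)) :
    y₀ ^ (m - 1) = 1 / (((m : ℝ) - 1) ^ 2 - 1) ∧
    x₀⁻¹ = ((m : ℝ) - 1) ^ (2 * (m - 1)) *
      ((m : ℝ) ^ 2 - 2 * m) ^ (-(((m : ℝ) ^ 2 - 2 * m) / ((m : ℝ) - 1))) := by
  have hm3 : (3:ℝ) ≤ (m:ℝ) := by exact_mod_cast hm
  set c : ℝ := (m:ℝ) - 1 with hc
  have hc2 : (2:ℝ) ≤ c := by simp [hc]; linarith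
  have hcpos : 0 < c := by linarith
  have hdpos : (0:ℝ) < c ^ 2 - 1 := by nlinarith
  have hdne : c ^ 2 - 1 ≠ 0 := ne_of_gt hdpos
  have hm1 : m - 1 = (m - 2) + 1 := by omega
  set A : ℝ := 1 + y₀ ^ (m - 1) with hA
  have hApos : 0 < A := by positivity
  -- Step 1: A = c^2 * y₀^(m-1)
  have h2' : y₀ = x₀ * c ^ 2 * A ^ (m - 2) * y₀ ^ (m - 1) := by
    rw [hm1, pow_succ]
    calc y₀ = 1 * y₀ := (one_mul y₀).symm
    _ = (x₀ * c ^ 2 * A ^ (m - 2) * y₀ ^ (m - 2)) * y₀ := by rw [← h2]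
    _ = _ := by ring
  have e : x₀ * (A ^ (m - 2) * A) = x₀ * c ^ 2 * A ^ (m - 2) * y₀ ^ (m - 1) := by
    rw [← pow_succ, ← hm1, ← h1]
    exact h2'
  have key : A = c ^ 2 * y₀ ^ (m - 1) := by
    have hne' : x₀ * A ^ (m - 2) ≠ 0 := by positivity
    apply mul_right_cancel₀ hne'
    linear_combination e
  have hY : y₀ ^ (m - 1) = 1 / (c ^ 2 - 1) := by
    rw [eq_div_iff hdne]
    have h := key
    rw [hA] at h
    linear_combination -h
  refine ⟨hY, ?_⟩
  -- Step 2
  have hmn : ((m - 1 : ℕ) : ℝ) = c := by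
    have h1m : (1:ℕ) ≤ m := by omega
    push_cast [h1m]
    simp [hc]
  have hne : m - 1 ≠ 0 := by omega
  have hy : y₀ = ((c ^ 2 - 1)⁻¹) ^ (((m - 1 : ℕ) : ℝ)⁻¹) := by
    rw [← one_div, ← hY, Real.pow_rpow_inv_natCast hy₀.le hne]
  have hyinv : y₀⁻¹ = (c ^ 2 - 1) ^ ((c : ℝ)⁻¹) := by
    rw [hy, Real.inv_rpow hdpos.le, ← Real.rpow_neg hdpos.le, hmn,
      Real.rpow_neg hdpos.le, inv_inv]
  have hpowA : ((c ^ 2 - 1)⁻¹) ^ (m - 1) = (c ^ 2 - 1) ^ (-(c : ℝ)) := by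
    rw [← Real.rpow_natCast ((c ^ 2 - 1)⁻¹) (m - 1), Real.inv_rpow hdpos.le,
      ← Real.rpow_neg hdpos.le, hmn]
  have hAval : A = c ^ 2 * (c ^ 2 - 1)⁻¹ := by
    rw [hA, hY]
    field_simp
    ring
  have hd : (m:ℝ) ^ 2 - 2 * m = c ^ 2 - 1 := by simp [hc]; ring
  have hx₀inv : x₀⁻¹ = A ^ (m - 1) * y₀⁻¹ := by
    rw [h1]
    field_simp
  rw [hx₀inv, hAval, mul_pow, ← pow_mul, hpowA, hyinv, mul_assoc,
    ← Real.rpow_add hdpos, hd]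
  congr 1
  field_simp
  ring
end

section
/- Let n, t be natural numbers and n₁, …, n_t natural numbers with n_i ≤ n for all i. Then there exist subspaces W₁, …, W_t of ℂⁿ with dim W_i = n_i such that for every nonempty subset S ⊆ {1, …, t}, the dimension of the intersection ⋂_{i ∈ S} W_i equals max(0, Σ_{i ∈ S} n_i − (|S| − 1)·n). -/
open Module Matrix


/-- The linear functional `x ↦ ∑ k, a^k * x k` on `ℂⁿ`. -/
noncomputable def genpos_lp (n : ℕ) (a : ℂ) : (Fin n → ℂ) →ₗ[ℂ] ℂ :=
  ∑ k : Fin n, a ^ (k : ℕ) • LinearMap.proj k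

lemma genpos_lp_apply (n : ℕ) (a : ℂ) (x : Fin n → ℂ) :
    genpos_lp n a x = ∑ k : Fin n, a ^ (k : ℕ) * x k := by
  simp [genpos_lp]

/-- The power vector `(j^0, …, j^(n-1))`. -/
noncomputable def genpos_vv (n : ℕ) (j : ℕ) : Fin n → ℂ := fun k => (j : ℂ) ^ (k : ℕ)

lemma genpos_li_of_card_eq (n : ℕ) (B : Finset ℕ) (hB : B.card = n) :
    LinearIndependent ℂ (fun j : B => genpos_vv n j) := by
  set e := B.orderIsoOfFin hB with he
  have hc : Function.Injective (fun i : Fin n => (((e i : ℕ)) : ℂ)) := by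
    intro i j h
    exact e.injective (Subtype.ext (Nat.cast_injective h))
  have hdet : (vandermonde (fun i : Fin n => (((e i : ℕ)) : ℂ))).det ≠ 0 :=
    det_vandermonde_ne_zero_iff.mpr hc
  have hU : IsUnit (vandermonde (fun i : Fin n => (((e i : ℕ)) : ℂ))) :=
    (Matrix.isUnit_iff_isUnit_det _).mpr (isUnit_iff_ne_zero.mpr hdet)
  have hli := Matrix.linearIndependent_rows_iff_isUnit.mpr hU
  have h2 : LinearIndependent ℂ ((fun j : B => genpos_vv n j) ∘ e.toEquiv) := by
    have hfun : (fun j : B => genpos_vv n j) ∘ e.toEquiv =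
        (vandermonde (fun i : Fin n => (((e i : ℕ)) : ℂ))).row := by
      ext i k
      simp [genpos_vv, Matrix.row, vandermonde]
    rw [hfun]
    exact hli
  exact (linearIndependent_equiv e.toEquiv).mp h2

lemma genpos_li_of_card_le (n : ℕ) (B : Finset ℕ) (hB : B.card ≤ n) :
    LinearIndependent ℂ (fun j : B => genpos_vv n j) := by
  obtain ⟨C, hBC, -, hC⟩ := Finset.exists_subsuperset_card_eq
    (t := B ∪ Finset.range (B.card + n)) (n := n) Finset.subset_union_left hB
    (le_trans (by simp) (Finset.card_le_card Finset.subset_union_right))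
  have hCli := genpos_li_of_card_eq n C hC
  have : (fun j : B => genpos_vv n j) =
      (fun j : C => genpos_vv n j) ∘ (Set.inclusion (by exact_mod_cast hBC)) := rfl
  rw [this]
  exact hCli.comp _ (Set.inclusion_injective _)

lemma genpos_finrank_inf_ker (n : ℕ) (B : Finset ℕ) :
    finrank ℂ ↥(⨅ j ∈ B, LinearMap.ker (genpos_lp n (j : ℂ))) = n - min B.card n := by
  classical
  set L : (Fin n → ℂ) →ₗ[ℂ] (B → ℂ) := LinearMap.pi (fun j : B => genpos_lp n ((j : ℕ) : ℂ))
    with hL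
  have hker : (⨅ j ∈ B, LinearMap.ker (genpos_lp n ((j : ℕ) : ℂ))) = LinearMap.ker L := by
    ext x
    simp [hL, Submodule.mem_iInf, LinearMap.pi_apply, funext_iff]
  rw [hker]
  rcases le_or_gt B.card n with hn | hn
  · -- L is "onto a card-dimensional space": rank = card
    have hmin : min B.card n = B.card := min_eq_left hn
    set M : Matrix B (Fin n) ℂ := Matrix.of (fun j k => genpos_vv n j k) with hM
    have hLM : L = M.mulVecLin := by
      ext x j
      simp [hL, hM, genpos_lp_apply, Matrix.mulVec, dotProduct, genpos_vv]
    have hrange : finrank ℂ (LinearMap.range L) = B.card := by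
      rw [hLM]
      have h1 : finrank ℂ (LinearMap.range M.mulVecLin) = M.rank := rfl
      rw [h1, ← Matrix.rank_transpose]
      have h2 : Mᵀ.rank = finrank ℂ (Submodule.span ℂ (Set.range Mᵀᵀ)) := by
        rw [Matrix.rank, Matrix.range_mulVecLin]; rfl
      rw [h2, Matrix.transpose_transpose]
      have hli : LinearIndependent ℂ (fun j : B => M j) := genpos_li_of_card_le n B hn
      rw [finrank_span_eq_card hli]
      simp
    have := LinearMap.finrank_range_add_finrank_ker L
    rw [hrange] at this
    have hdom : finrank ℂ (Fin n → ℂ) = n := by simp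
    omega
  · -- ker L = ⊥
    have hmin : min B.card n = n := min_eq_right hn.le
    obtain ⟨C, hCB, hC⟩ := Finset.exists_subset_card_eq hn.le
    set e := C.orderIsoOfFin hC with he
    have hc : Function.Injective (fun i : Fin n => (((e i : ℕ)) : ℂ)) := by
      intro i j h
      exact e.injective (Subtype.ext (Nat.cast_injective h))
    have hU : IsUnit (vandermonde (fun i : Fin n => (((e i : ℕ)) : ℂ))) :=
      (Matrix.isUnit_iff_isUnit_det _).mpr
        (isUnit_iff_ne_zero.mpr (det_vandermonde_ne_zero_iff.mpr hc))
    have hinj := Matrix.mulVec_injective_iff_isUnit.mpr hU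
    have hbot : LinearMap.ker L = ⊥ := by
      rw [LinearMap.ker_eq_bot']
      intro x hx
      have hx' : ∀ j : B, genpos_lp n ((j : ℕ) : ℂ) x = 0 := by
        intro j
        have := congr_fun hx j
        simpa [hL] using this
      have : vandermonde (fun i : Fin n => (((e i : ℕ)) : ℂ)) *ᵥ x = 0 := by
        funext i
        have := hx' ⟨(e i : ℕ), hCB (e i).2⟩
        simpa [Matrix.mulVec, dotProduct, vandermonde, genpos_lp_apply] using this
      have h0 : vandermonde (fun i : Fin n => (((e i : ℕ)) : ℂ)) *ᵥ x
          = vandermonde (fun i : Fin n => (((e i : ℕ)) : ℂ)) *ᵥ 0 := by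
        simpa using this
      exact hinj h0
    rw [hbot, hmin]
    simp

/-- **Generic position of subspaces.** Given `n₁, …, n_t ≤ n`, there exist
subspaces `W₁, …, W_t` of `ℂⁿ` with `dim Wᵢ = nᵢ` such that for every nonempty
subset `S ⊆ {1, …, t}` the dimension of `⋂_{i ∈ S} Wᵢ` equals
`max(0, Σ_{i ∈ S} nᵢ − (|S| − 1)·n)`. -/
theorem generic_position_subspaces (n t : ℕ) (ns : Fin t → ℕ)
    (hns : ∀ i, ns i ≤ n) :
    ∃ W : Fin t → Submodule ℂ (Fin n → ℂ),
      (∀ i, finrank ℂ (W i) = ns i) ∧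
      ∀ S : Finset (Fin t), S.Nonempty →
        (finrank ℂ ↥(⨅ i ∈ S, W i : Submodule ℂ (Fin n → ℂ)) : ℤ) =
          max 0 ((∑ i ∈ S, (ns i : ℤ)) - ((S.card : ℤ) - 1) * n) := by
  classical
  set block : Fin t → Finset ℕ :=
    fun i => Finset.image (fun j : Fin (n - ns i) => n * (i : ℕ) + (j : ℕ)) Finset.univ
    with hblock
  have hcard : ∀ i, (block i).card = n - ns i := by
    intro i
    rw [hblock]
    rw [Finset.card_image_of_injective _ (fun a b h => Fin.ext (by omega))]
    simp
  have hdisj : ∀ i i' : Fin t, i ≠ i' → Disjoint (block i) (block i') := by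
    intro i i' hne
    rw [Finset.disjoint_left]
    intro x hx hx'
    simp only [hblock, Finset.mem_image, Finset.mem_univ, true_and] at hx hx'
    obtain ⟨j, hj⟩ := hx
    obtain ⟨j', hj'⟩ := hx'
    have hjn : (j : ℕ) < n := lt_of_lt_of_le j.2 (Nat.sub_le n _)
    have hj'n : (j' : ℕ) < n := lt_of_lt_of_le j'.2 (Nat.sub_le n _)
    have hn0 : 0 < n := lt_of_le_of_lt (Nat.zero_le _) hjn
    have e1 : x / n = (i : ℕ) := by
      rw [← hj, Nat.mul_add_div hn0, Nat.div_eq_of_lt hjn]; omega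
    have e2 : x / n = (i' : ℕ) := by
      rw [← hj', Nat.mul_add_div hn0, Nat.div_eq_of_lt hj'n]; omega
    exact hne (Fin.ext (e1 ▸ e2))
  refine ⟨fun i => ⨅ j ∈ block i, LinearMap.ker (genpos_lp n (j : ℂ)), ?_, ?_⟩
  · intro i
    rw [genpos_finrank_inf_ker, hcard]
    have := hns i
    omega
  · intro S hS
    have hbi : (⨅ i ∈ S, ⨅ j ∈ block i, LinearMap.ker (genpos_lp n (j : ℂ)))
        = ⨅ j ∈ S.biUnion block, LinearMap.ker (genpos_lp n (j : ℂ)) :=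
      (Finset.iInf_biUnion S block _).symm
    rw [hbi, genpos_finrank_inf_ker,
      Finset.card_biUnion (fun i _ i' _ h => hdisj i i' h)]
    have hc1 : 1 ≤ S.card := Finset.Nonempty.card_pos hS
    have hsum : ((∑ i ∈ S, (block i).card : ℕ) : ℤ)
        = (S.card : ℤ) * n - ∑ i ∈ S, (ns i : ℤ) := by
      push_cast
      rw [Finset.sum_congr rfl (fun i _ => by
        rw [hcard i, Nat.cast_sub (hns i)])]
      rw [Finset.sum_sub_distrib, Finset.sum_const, nsmul_eq_mul]
    have hring : ((S.card : ℤ) - 1) * n = (S.card : ℤ) * n - n := by ring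
    rw [hring]
    generalize hP : (S.card : ℤ) * (n : ℤ) = P at hsum ⊢
    generalize hA : (∑ i ∈ S, (ns i : ℤ)) = A at hsum ⊢
    omega
end
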